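/- The correspondence μ ↦ 𝒱(μ) from Δ(X) to subsets of ℝ^n is lower hemicontinuous: for every sequence μ_m → μ in Δ(X) and every v ∈ 𝒱(μ), there exist v_m ∈ 𝒱(μ_m) with v_m → v. -/

import Mathlib

open MeasureTheory Topology Filter

noncomputable section

/-- Expected value `E_P[W] = ∫ W(ν) dP(ν)` of a function `W : Δ(X) → ℝ`
under a Borel probability measure `P ∈ Δ²(X)` on the simplex `Δ(X)`. -/
def expct {X : Type*} [Fintype X] (P : ProbabilityMeasure (stdSimplex ℝ X))
    (W : stdSimplex ℝ X → ℝ) : ℝ :=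
  ∫ ν, W ν ∂(P : Measure (stdSimplex ℝ X))

/-- `P ∈ Δ²(X)` has barycenter `E_P[ν] = μ`. -/
def isBary {X : Type*} [Fintype X] (P : ProbabilityMeasure (stdSimplex ℝ X))
    (μ : stdSimplex ℝ X) : Prop :=
  ∀ x : X, expct P (fun ν => (ν : X → ℝ) x) = (μ : X → ℝ) x

/-- `P ∈ Δ²(X)` has support of size at most `m`: it is a convex combination of at
most `m` Dirac measures on `Δ(X)`. -/
def finSupp {X : Type*} [Fintype X] (P : ProbabilityMeasure (stdSimplex ℝ X)) (m : ℕ) : Prop :=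
  ∃ (p : Fin m → ℝ) (ν : Fin m → stdSimplex ℝ X),
    (∀ j, 0 ≤ p j) ∧ (∑ j, p j = 1) ∧
    (P : Measure (stdSimplex ℝ X)) = ∑ j, ENNReal.ofReal (p j) • Measure.dirac (ν j)

/-- The information possibility set
`𝒱(μ) = {(E_P[V^1], …, E_P[V^n]) : P ∈ Δ²(X), E_P[ν] = μ} ⊆ ℝ^n`. -/
def VSet {X : Type*} [Fintype X] {n : ℕ} (V : Fin n → stdSimplex ℝ X → ℝ)
    (μ : stdSimplex ℝ X) : Set (Fin n → ℝ) :=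
  {v | ∃ P : ProbabilityMeasure (stdSimplex ℝ X), isBary P μ ∧ ∀ i, expct P (V i) = v i}

/-- the correspondence `μ ↦ 𝒱(μ)` is lower hemicontinuous: if `μ_m → μ` and
`v ∈ 𝒱(μ)`, then there exist `v_m ∈ 𝒱(μ_m)` with `v_m → v`. -/
theorem statement_9 {X : Type*} [Fintype X] [Nonempty X] {n : ℕ}
    (V : Fin n → stdSimplex ℝ X → ℝ) (hV : ∀ i, Continuous (V i))
    (μs : ℕ → stdSimplex ℝ X) (μ : stdSimplex ℝ X)
    (hμ : Tendsto μs atTop (𝓝 μ))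
    (v : Fin n → ℝ) (hv : v ∈ VSet V μ) :
    ∃ vs : ℕ → Fin n → ℝ, (∀ m, vs m ∈ VSet V (μs m)) ∧ Tendsto vs atTop (𝓝 v) := by
  simp only [VSet, isBary, expct, Set.mem_setOf_eq] at hv ⊢
  classical
  obtain ⟨P, hbary, hPV⟩ := hv
  haveI : CompactSpace (stdSimplex ℝ X) :=
    isCompact_iff_compactSpace.mp (isCompact_stdSimplex ℝ X)
  -- distance to the limit
  set d : ℕ → ℝ := fun m => dist ((μs m : X → ℝ)) ((μ : X → ℝ)) with hd
  have hd0 : ∀ m, 0 ≤ d m := fun m => dist_nonneg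
  have hdlim : Tendsto d atTop (𝓝 0) := by
    have hcoe : Tendsto (fun m => ((μs m : X → ℝ))) atTop (𝓝 (μ : X → ℝ)) :=
      ((continuous_subtype_val).tendsto μ).comp hμ
    exact tendsto_iff_dist_tendsto_zero.mp hcoe
  -- minimal positive coordinate of μ
  set F : Finset X := Finset.univ.filter (fun x => 0 < (μ : X → ℝ) x) with hF
  have hFne : F.Nonempty := by
    by_contra h
    rw [Finset.not_nonempty_iff_eq_empty] at h
    have hall : ∀ x : X, (μ : X → ℝ) x = 0 := by
      intro x
      have hx : x ∉ F := by rw [h]; exact Finset.notMem_empty x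
      have : 0 ≤ (μ : X → ℝ) x := μ.2.1 x
      simp only [hF, Finset.mem_filter, Finset.mem_univ, true_and, not_lt] at hx
      linarith
    have hsum : ∑ x, (μ : X → ℝ) x = 1 := μ.2.2
    rw [Finset.sum_congr rfl (fun x _ => hall x)] at hsum
    simp at hsum
  set c : ℝ := F.inf' hFne (fun x => (μ : X → ℝ) x) with hc
  have hc0 : 0 < c := by
    rw [hc, Finset.lt_inf'_iff]
    intro x hx
    simpa [hF, Finset.mem_filter] using hx
  have hcle : ∀ x : X, 0 < (μ : X → ℝ) x → c ≤ (μ : X → ℝ) x := by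
    intro x hx
    exact Finset.inf'_le _ (by simp [hF, hx])
  -- the mixing weights
  set ε : ℕ → ℝ := fun m => min 1 (max (1 / (m + 1 : ℝ)) (d m / c)) with hε
  have hε0 : ∀ m, 0 < ε m := fun m =>
    lt_min one_pos (lt_max_of_lt_left (by positivity))
  have hε1 : ∀ m, ε m ≤ 1 := fun m => min_le_left _ _
  have hεlim : Tendsto ε atTop (𝓝 0) := by
    have h1 : Tendsto (fun m : ℕ => max (1 / (m + 1 : ℝ)) (d m / c)) atTop (𝓝 (max 0 0)) :=
      (tendsto_one_div_add_atTop_nhds_zero_nat).max (by simpa using hdlim.div_const c)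
    rw [max_self] at h1
    exact squeeze_zero (fun m => (hε0 m).le) (fun m => min_le_right _ _) h1
  -- key inequality
  have key : ∀ m x, (1 - ε m) * (μ : X → ℝ) x ≤ (μs m : X → ℝ) x := by
    intro m x
    rcases (μ.2.1 x).eq_or_lt with h0 | hpos
    · have : (1 - ε m) * (μ : X → ℝ) x = 0 := by rw [show (μ : X → ℝ) x = 0 from h0.symm]; ring
      rw [this]; exact (μs m).2.1 x
    · have hdx : (μ : X → ℝ) x - (μs m : X → ℝ) x ≤ d m := by
        have := dist_le_pi_dist ((μs m : X → ℝ)) ((μ : X → ℝ)) x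
        rw [dist_comm] at this
        calc (μ : X → ℝ) x - (μs m : X → ℝ) x ≤ |(μ : X → ℝ) x - (μs m : X → ℝ) x| :=
              le_abs_self _
          _ = dist ((μ : X → ℝ) x) ((μs m : X → ℝ) x) := (Real.dist_eq _ _).symm
          _ ≤ d m := this
      have hμc : c ≤ (μ : X → ℝ) x := hcle x hpos
      rcases le_total (max (1 / (m + 1 : ℝ)) (d m / c)) 1 with hle | hge
      · have hεeq : ε m = max (1 / (m + 1 : ℝ)) (d m / c) := min_eq_right hle
        have h1 : d m / c ≤ ε m := hεeq ▸ le_max_right _ _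
        have h2 : d m ≤ ε m * c := by
          rw [div_le_iff₀ hc0] at h1; linarith
        nlinarith [hε0 m, (μs m).2.1 x]
      · have hεeq : ε m = 1 := min_eq_left hge
        rw [hεeq]
        have : 0 ≤ (μs m : X → ℝ) x := (μs m).2.1 x
        nlinarith
  -- the correction points
  have hσmem : ∀ m, (fun x => (((μs m : X → ℝ) x) - (1 - ε m) * (μ : X → ℝ) x) / ε m)
      ∈ stdSimplex ℝ X := by
    intro m
    constructor
    · intro x
      exact div_nonneg (by linarith [key m x]) (hε0 m).le
    · rw [← Finset.sum_div]
      have : ∑ x, (((μs m : X → ℝ) x) - (1 - ε m) * (μ : X → ℝ) x)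
          = ∑ x, ((μs m : X → ℝ) x) - (1 - ε m) * ∑ x, (μ : X → ℝ) x := by
        rw [Finset.sum_sub_distrib, Finset.mul_sum]
      rw [this, show ∑ x, (μs m : X → ℝ) x = 1 from (μs m).2.2, show ∑ x, (μ : X → ℝ) x = 1 from μ.2.2]
      rw [mul_one, sub_sub_cancel, div_self (hε0 m).ne']
  set σ : ℕ → stdSimplex ℝ X := fun m =>
    ⟨fun x => (((μs m : X → ℝ) x) - (1 - ε m) * (μ : X → ℝ) x) / ε m, hσmem m⟩ with hσ
  -- the perturbed measures
  have hprob : ∀ m, IsProbabilityMeasure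
      (ENNReal.ofReal (1 - ε m) • (P : Measure (stdSimplex ℝ X))
        + ENNReal.ofReal (ε m) • Measure.dirac (σ m)) := by
    intro m
    constructor
    simp only [Measure.add_apply, Measure.smul_apply, smul_eq_mul, measure_univ, mul_one]
    rw [← ENNReal.ofReal_add (by linarith [hε1 m]) (hε0 m).le]
    norm_num
  set Pm : ℕ → ProbabilityMeasure (stdSimplex ℝ X) := fun m =>
    ⟨_, hprob m⟩ with hPm
  -- integral computation
  have hint : ∀ m (W : stdSimplex ℝ X → ℝ), Continuous W →
      (∫ ν, W ν ∂(Pm m : Measure (stdSimplex ℝ X)))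
        = (1 - ε m) * (∫ ν, W ν ∂(P : Measure (stdSimplex ℝ X))) + ε m * W (σ m) := by
    intro m W hW
    have hcs : HasCompactSupport W :=
      IsCompact.of_isClosed_subset isCompact_univ (isClosed_tsupport W) (Set.subset_univ _)
    have hIP : Integrable W (P : Measure (stdSimplex ℝ X)) :=
      hW.integrable_of_hasCompactSupport hcs
    have hID : Integrable W (Measure.dirac (σ m)) :=
      hW.integrable_of_hasCompactSupport hcs
    have : (Pm m : Measure (stdSimplex ℝ X))
        = ENNReal.ofReal (1 - ε m) • (P : Measure (stdSimplex ℝ X))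
          + ENNReal.ofReal (ε m) • Measure.dirac (σ m) := rfl
    rw [this, integral_add_measure (hIP.smul_measure ENNReal.ofReal_ne_top)
      (hID.smul_measure ENNReal.ofReal_ne_top),
      integral_smul_measure, integral_smul_measure, integral_dirac,
      ENNReal.toReal_ofReal (by linarith [hε1 m]), ENNReal.toReal_ofReal (hε0 m).le]
    simp [smul_eq_mul]
  -- barycenter of Pm m is μs m
  have hbarym : ∀ m x, (∫ ν, (ν : X → ℝ) x ∂(Pm m : Measure (stdSimplex ℝ X)))
      = (μs m : X → ℝ) x := by
    intro m x
    have hcont : Continuous (fun ν : stdSimplex ℝ X => (ν : X → ℝ) x) :=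
      (continuous_apply x).comp continuous_subtype_val
    rw [hint m _ hcont, hbary x]
    show (1 - ε m) * (μ : X → ℝ) x
        + ε m * ((((μs m : X → ℝ) x) - (1 - ε m) * (μ : X → ℝ) x) / ε m) = _
    rw [mul_comm (ε m), div_mul_cancel₀ _ (hε0 m).ne']; ring
  refine ⟨fun m i => (1 - ε m) * v i + ε m * V i (σ m), fun m => ⟨Pm m, hbarym m, ?_⟩, ?_⟩
  · intro i
    rw [hint m _ (hV i), hPV i]
  · rw [tendsto_pi_nhds]
    intro i
    have hb : ∃ C : ℝ, ∀ y : stdSimplex ℝ X, ‖V i y‖ ≤ C := by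
      haveI : Nonempty (stdSimplex ℝ X) := ⟨σ 0⟩
      obtain ⟨y0, _, hy0⟩ := isCompact_univ.exists_isMaxOn (Set.univ_nonempty)
        ((hV i).norm.continuousOn)
      exact ⟨‖V i y0‖, fun y => hy0 (Set.mem_univ y)⟩
    obtain ⟨C, hC⟩ := hb
    have hC0 : 0 ≤ C := le_trans (norm_nonneg _) (hC (σ 0))
    have h1 : Tendsto (fun m => (1 - ε m) * v i) atTop (𝓝 ((1 - 0) * v i)) :=
      ((tendsto_const_nhds.sub hεlim).mul tendsto_const_nhds)
    have h2 : Tendsto (fun m => ε m * V i (σ m)) atTop (𝓝 0) := by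
      apply squeeze_zero_norm (a := fun m => ε m * C)
      · intro m
        rw [norm_mul, Real.norm_eq_abs (ε m), abs_of_nonneg (hε0 m).le]
        exact mul_le_mul_of_nonneg_left (hC _) (hε0 m).le
      · have := hεlim.mul_const C
        rw [zero_mul] at this
        exact this
    have := h1.add h2
    simpa using this
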